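/- arXiv:1301.6211 — 5 statements merged into one kernel-verified Lean document; each statement's English description precedes it below -/
import Mathlib

section
/- Let λ : ℕ≥1 → ℂ satisfy the Hecke relation λ(n)·λ(m) = ∑_{e | gcd(n,m)} λ(n·m/e²) for all positive integers n, m. Let ψ : ℝ → ℂ be a function whose support is a compact subset of (0,∞). Then for every positive integer m and every real X > 0 one has the identity ∑_{n≥1} λ(n+m)·λ(n)·ψ(πn/X) = ∑_{d | m} ∑_{n≥1} λ(n(n+d))·ψ(πmn/(dX)). (Both sums are finite because ψ has compact support in (0,∞).) -/
/-- Let `lam : ℕ → ℂ` satisfy the Hecke relation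
`lam n * lam m = ∑_{e | gcd(n,m)} lam (n*m/e²)` for all positive integers `n, m`.
Let `ψ : ℝ → ℂ` have compact support contained in `(0,∞)`.  Then for every positive
integer `m` and every real `X > 0`,
`∑_{n≥1} lam(n+m)·lam(n)·ψ(πn/X) = ∑_{d ∣ m} ∑_{n≥1} lam(n(n+d))·ψ(πmn/(dX))`. -/
theorem stmt_0 (lam : ℕ → ℂ)
    (hHecke : ∀ n m : ℕ, 0 < n → 0 < m →
      lam n * lam m = ∑ e ∈ (Nat.gcd n m).divisors, lam (n * m / e ^ 2))
    (ψ : ℝ → ℂ) (hψc : HasCompactSupport ψ) (hψs : tsupport ψ ⊆ Set.Ioi 0)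
    (m : ℕ) (hm : 0 < m) (X : ℝ) (hX : 0 < X) :
    ∑' n : ℕ+, lam (n + m) * lam n * ψ (Real.pi * n / X)
      = ∑ d ∈ m.divisors, ∑' n : ℕ+,
          lam (n * (n + d)) * ψ (Real.pi * m * n / (d * X)) := by
  classical
  -- ψ vanishes beyond some R
  obtain ⟨R, hR⟩ := hψc.isCompact.bddAbove
  have hψ0 : ∀ x : ℝ, R < x → ψ x = 0 := by
    intro x hx
    by_contra h
    exact absurd (hR (subset_tsupport ψ h)) (not_le.2 hx)
  have hfin : ∀ c : ℝ, 0 < c → {n : ℕ+ | ψ (c * n) ≠ 0}.Finite := by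
    intro c hc
    have hsub : {n : ℕ+ | ψ (c * n) ≠ 0} ⊆
        (fun n : ℕ+ => (n : ℕ)) ⁻¹' Set.Iic ⌈R / c⌉₊ := by
      intro n hn
      have h1 : c * n ≤ R := by
        by_contra h
        exact hn (hψ0 _ (not_le.1 h))
      have h2 : (n : ℝ) ≤ R / c := (le_div_iff₀ hc).2 (by linarith [mul_comm c ((n : ℕ) : ℝ)])
      have h3 : ((n : ℕ) : ℝ) ≤ (⌈R / c⌉₊ : ℝ) := h2.trans (Nat.le_ceil _)
      exact_mod_cast h3
    exact Set.Finite.subset ((Set.finite_Iic _).preimage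
      (Set.injOn_of_injective (fun a b h => PNat.coe_injective h))) hsub
  have hsum : ∀ (c : ℝ), 0 < c → ∀ f : ℕ+ → ℂ,
      (∀ n : ℕ+, ψ (c * n) = 0 → f n = 0) → Summable f := by
    intro c hc f hf
    refine summable_of_ne_finset_zero (s := (hfin c hc).toFinset) ?_
    intro n hn
    apply hf
    by_contra h
    exact hn ((hfin c hc).mem_toFinset.2 h)
  -- pointwise Hecke expansion
  have hdiv : ∀ n : ℕ+, lam ((n : ℕ) + m) * lam n =
      ∑ e ∈ m.divisors, if e ∣ (n : ℕ) then lam (((n : ℕ) + m) * n / e ^ 2) else 0 := by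
    intro n
    rw [hHecke ((n : ℕ) + m) n (by positivity) n.pos]
    have hg : Nat.gcd ((n : ℕ) + m) (n : ℕ) = Nat.gcd m (n : ℕ) := by
      rw [Nat.add_comm, Nat.gcd_add_self_left]
    rw [hg]
    have hset : (Nat.gcd m (n : ℕ)).divisors = m.divisors.filter (· ∣ (n : ℕ)) := by
      ext d
      simp only [Nat.mem_divisors, Finset.mem_filter, Nat.dvd_gcd_iff]
      constructor
      · rintro ⟨⟨h1, h2⟩, -⟩
        exact ⟨⟨h1, hm.ne'⟩, h2⟩
      · rintro ⟨⟨h1, -⟩, h2⟩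
        refine ⟨⟨h1, h2⟩, ?_⟩
        simpa using Nat.gcd_ne_zero_left hm.ne'
    rw [hset, Finset.sum_filter]
  -- the summand of the RHS as a function of d
  set F : ℕ → ℂ := fun d => ∑' n : ℕ+,
      lam ((n : ℕ) * ((n : ℕ) + d)) * ψ (Real.pi * m * n / (d * X)) with hF
  -- inner reindexing
  have hinner : ∀ e ∈ m.divisors,
      (∑' n : ℕ+, (if e ∣ (n : ℕ) then lam (((n : ℕ) + m) * n / e ^ 2) else 0)
        * ψ (Real.pi * n / X)) = F (m / e) := by
    intro e he
    obtain ⟨heDvd, -⟩ := Nat.mem_divisors.mp he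
    have he0 : 0 < e := Nat.pos_of_dvd_of_pos heDvd hm
    set d : ℕ := m / e with hdDef
    have hed : e * d = m := Nat.mul_div_cancel' heDvd
    have hd0 : 0 < d := Nat.div_pos (Nat.le_of_dvd hm heDvd) he0
    set E : ℕ+ := ⟨e, he0⟩ with hE
    have hinj : Function.Injective (fun k : ℕ+ => E * k) := fun a b h => by
      exact mul_left_cancel h
    have hsupp : Function.support (fun n : ℕ+ =>
        (if e ∣ (n : ℕ) then lam (((n : ℕ) + m) * n / e ^ 2) else 0)
          * ψ (Real.pi * n / X)) ⊆ Set.range (fun k : ℕ+ => E * k) := by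
      intro n hn
      have hdvd : e ∣ (n : ℕ) := by
        by_contra h
        simp [h] at hn
      obtain ⟨c, hc⟩ := hdvd
      have hc0 : 0 < c := by
        rcases Nat.eq_zero_or_pos c with h | h
        · exfalso; have hp := n.pos; rw [hc, h, Nat.mul_zero] at hp; exact lt_irrefl 0 hp
        · exact h
      refine ⟨⟨c, hc0⟩, ?_⟩
      apply PNat.coe_injective
      simp [hE, hc]; rfl
    rw [← hinj.tsum_eq hsupp, hF]
    apply tsum_congr
    intro k
    have hco : ((E * k : ℕ+) : ℕ) = e * (k : ℕ) := by simp [hE]; rfl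
    have hdvd : e ∣ ((E * k : ℕ+) : ℕ) := by rw [hco]; exact ⟨k, rfl⟩
    rw [if_pos hdvd]
    congr 1
    · congr 1
      rw [hco]
      have : (e * (k : ℕ) + m) * (e * (k : ℕ)) = e ^ 2 * ((k : ℕ) * ((k : ℕ) + d)) := by
        rw [← hed]; ring
      rw [this, Nat.mul_div_cancel_left _ (by positivity)]
    · congr 1
      rw [hco]
      have hm' : (m : ℝ) = (e : ℝ) * (d : ℝ) := by exact_mod_cast hed.symm
      have hd' : (d : ℝ) ≠ 0 := by exact_mod_cast hd0.ne'
      push_cast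
      rw [hm']
      field_simp
  -- assemble
  calc
    ∑' n : ℕ+, lam ((n : ℕ) + m) * lam n * ψ (Real.pi * n / X)
        = ∑' n : ℕ+, ∑ e ∈ m.divisors,
            (if e ∣ (n : ℕ) then lam (((n : ℕ) + m) * n / e ^ 2) else 0)
              * ψ (Real.pi * n / X) := by
          refine tsum_congr fun n => ?_
          rw [hdiv n, Finset.sum_mul]
    _ = ∑ e ∈ m.divisors, ∑' n : ℕ+,
            (if e ∣ (n : ℕ) then lam (((n : ℕ) + m) * n / e ^ 2) else 0)
              * ψ (Real.pi * n / X) := by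
          refine Summable.tsum_finsetSum fun e he => ?_
          refine hsum (Real.pi / X) (by positivity) _ fun n h0 => ?_
          have : ψ (Real.pi * n / X) = 0 := by
            rw [show Real.pi * (n : ℝ) / X = Real.pi / X * n by ring]; exact h0
          simp [this]
    _ = ∑ e ∈ m.divisors, F (m / e) := Finset.sum_congr rfl hinner
    _ = ∑ d ∈ m.divisors, F d := Nat.sum_div_divisors m F
end

section
/- There exists an absolute constant C > 0 such that for all R > 0, all r₁, r₂ ∈ [R, 2R], and all d with 0 < d ≤ R: the second partial derivatives of Δ satisfy |∂²Δ/∂r₁∂r₂(r₁,r₂) − 1| ≤ C·d²/R² and |∂²Δ/∂r₁²(r₁,r₂)| ≤ C·d²/R², |∂²Δ/∂r₂²(r₁,r₂)| ≤ C·d²/R². -/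
open Real Set Filter

private lemma sqrt_split {d s t : ℝ} (hd : 0 < d) (ht : 0 < t) (hs : 0 < s) :
    Real.sqrt (t * s * (t + d) * (s + d)) =
      Real.sqrt (t * (t + d)) * Real.sqrt (s * (s + d)) := by
  rw [← Real.sqrt_mul (by positivity)]
  ring_nf

private lemma hderiv_g {d t : ℝ} (hd : 0 < d) (ht : 0 < t) :
    HasDerivAt (fun t => Real.sqrt (t * (t + d)))
      ((2 * t + d) / (2 * Real.sqrt (t * (t + d)))) t := by
  have h1 : HasDerivAt (fun t : ℝ => t * (t + d)) (2 * t + d) t := by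
    have h : HasDerivAt (fun t : ℝ => t * (t + d)) (1 * (id t + d) + id t * 1) t :=
      (hasDerivAt_id t).mul ((hasDerivAt_id t).add_const d)
    convert h using 1
    simp; ring
  exact h1.sqrt (by positivity)

private lemma hderiv_g' {d t : ℝ} (hd : 0 < d) (ht : 0 < t) :
    HasDerivAt (fun t => (2 * t + d) / (2 * Real.sqrt (t * (t + d))))
      (-(d ^ 2) / (4 * Real.sqrt (t * (t + d)) ^ 3)) t := by
  have hu : 0 < Real.sqrt (t * (t + d)) := Real.sqrt_pos.2 (by positivity)
  have hu2 : Real.sqrt (t * (t + d)) ^ 2 = t * (t + d) := Real.sq_sqrt (by positivity)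
  have hnum : HasDerivAt (fun t : ℝ => 2 * t + d) 2 t := by
    simpa using ((hasDerivAt_id t).const_mul 2).add_const d
  have hden : HasDerivAt (fun t => 2 * Real.sqrt (t * (t + d)))
      (2 * ((2 * t + d) / (2 * Real.sqrt (t * (t + d))))) t :=
    (hderiv_g hd ht).const_mul 2
  have h : HasDerivAt (fun t => (2 * t + d) / (2 * Real.sqrt (t * (t + d))))
      ((2 * (2 * Real.sqrt (t * (t + d))) - (2 * t + d) * (2 * ((2 * t + d) / (2 * Real.sqrt (t * (t + d)))))) / (2 * Real.sqrt (t * (t + d))) ^ 2) t :=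
    hnum.div hden (by positivity)
  convert h using 1
  set u := Real.sqrt (t * (t + d))
  field_simp
  linear_combination (-16) * hu2

set_option maxHeartbeats 2000000 in
/-- With `Δ(r₁,r₂) = √(r₁r₂(r₁+d)(r₂+d))`, there is an absolute
constant `C > 0` such that for all `R > 0`, all `r₁, r₂ ∈ [R, 2R]` and all
`0 < d ≤ R`, the second partial derivatives satisfy
`|∂²Δ/∂r₁∂r₂ − 1| ≤ C·d²/R²`, `|∂²Δ/∂r₁²| ≤ C·d²/R²` and `|∂²Δ/∂r₂²| ≤ C·d²/R²`. -/
theorem stmt_6 :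
    ∃ C : ℝ, 0 < C ∧ ∀ R d r₁ r₂ : ℝ, 0 < R → 0 < d → d ≤ R →
      r₁ ∈ Set.Icc R (2 * R) → r₂ ∈ Set.Icc R (2 * R) →
      |deriv (fun s : ℝ =>
          deriv (fun t : ℝ => Real.sqrt (t * s * (t + d) * (s + d))) r₁) r₂ - 1|
        ≤ C * d ^ 2 / R ^ 2 ∧
      |deriv (deriv (fun t : ℝ => Real.sqrt (t * r₂ * (t + d) * (r₂ + d)))) r₁|
        ≤ C * d ^ 2 / R ^ 2 ∧
      |deriv (deriv (fun t : ℝ => Real.sqrt (r₁ * t * (r₁ + d) * (t + d)))) r₂|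
        ≤ C * d ^ 2 / R ^ 2 := by
  refine ⟨1, one_pos, ?_⟩
  intro R d r₁ r₂ hR hd hdR h1 h2
  obtain ⟨h1l, h1r⟩ := h1
  obtain ⟨h2l, h2r⟩ := h2
  have hr₁ : 0 < r₁ := lt_of_lt_of_le hR h1l
  have hr₂ : 0 < r₂ := lt_of_lt_of_le hR h2l
  set u₁ := Real.sqrt (r₁ * (r₁ + d)) with hu₁def
  set u₂ := Real.sqrt (r₂ * (r₂ + d)) with hu₂def
  have hu₁pos : 0 < u₁ := Real.sqrt_pos.2 (by positivity)
  have hu₂pos : 0 < u₂ := Real.sqrt_pos.2 (by positivity)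
  have hu₁sq : u₁ ^ 2 = r₁ * (r₁ + d) := Real.sq_sqrt (by positivity)
  have hu₂sq : u₂ ^ 2 = r₂ * (r₂ + d) := Real.sq_sqrt (by positivity)
  have hu₁ge : R ≤ u₁ := by
    rw [hu₁def, show R = Real.sqrt (R ^ 2) from (Real.sqrt_sq hR.le).symm]
    exact Real.sqrt_le_sqrt (by nlinarith)
  have hu₂ge : R ≤ u₂ := by
    rw [hu₂def, show R = Real.sqrt (R ^ 2) from (Real.sqrt_sq hR.le).symm]
    exact Real.sqrt_le_sqrt (by nlinarith)
  have hu₁le : u₁ ≤ 3 * R := by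
    rw [hu₁def, show (3 : ℝ) * R = Real.sqrt ((3 * R) ^ 2) from
      (Real.sqrt_sq (by positivity)).symm]
    exact Real.sqrt_le_sqrt (by nlinarith)
  have hu₂le : u₂ ≤ 3 * R := by
    rw [hu₂def, show (3 : ℝ) * R = Real.sqrt ((3 * R) ^ 2) from
      (Real.sqrt_sq (by positivity)).symm]
    exact Real.sqrt_le_sqrt (by nlinarith)
  -- Pointwise first-derivative formula (in the first variable)
  have hpt : ∀ s r : ℝ, 0 < s → 0 < r →
      deriv (fun t : ℝ => Real.sqrt (t * s * (t + d) * (s + d))) r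
        = (2 * r + d) / (2 * Real.sqrt (r * (r + d))) * Real.sqrt (s * (s + d)) := by
    intro s r hs hr
    have heq : (fun t : ℝ => Real.sqrt (t * s * (t + d) * (s + d)))
        =ᶠ[nhds r] (fun t : ℝ => Real.sqrt (t * (t + d)) * Real.sqrt (s * (s + d))) := by
      filter_upwards [isOpen_Ioi.mem_nhds (show r ∈ Set.Ioi (0:ℝ) from hr)] with t ht
      exact sqrt_split hd ht hs
    rw [heq.deriv_eq]
    exact (((hderiv_g hd hr).mul_const _)).deriv
  -- mixed second derivative
  have key1 : deriv (fun s : ℝ =>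
      deriv (fun t : ℝ => Real.sqrt (t * s * (t + d) * (s + d))) r₁) r₂
      = ((2 * r₁ + d) / (2 * u₁)) * ((2 * r₂ + d) / (2 * u₂)) := by
    have heq2 : (fun s : ℝ =>
        deriv (fun t : ℝ => Real.sqrt (t * s * (t + d) * (s + d))) r₁)
        =ᶠ[nhds r₂] (fun s : ℝ => (2 * r₁ + d) / (2 * u₁) * Real.sqrt (s * (s + d))) := by
      filter_upwards [isOpen_Ioi.mem_nhds (show r₂ ∈ Set.Ioi (0:ℝ) from hr₂)] with s hs
      exact hpt s r₁ hs hr₁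
    rw [heq2.deriv_eq]
    have := ((hderiv_g hd hr₂).const_mul ((2 * r₁ + d) / (2 * u₁))).deriv
    rw [this]
  -- second derivative in t
  have key2 : deriv (deriv (fun t : ℝ => Real.sqrt (t * r₂ * (t + d) * (r₂ + d)))) r₁
      = (-(d ^ 2) / (4 * u₁ ^ 3)) * u₂ := by
    have heq2 : deriv (fun t : ℝ => Real.sqrt (t * r₂ * (t + d) * (r₂ + d)))
        =ᶠ[nhds r₁] (fun t : ℝ => (2 * t + d) / (2 * Real.sqrt (t * (t + d))) * u₂) := by
      filter_upwards [isOpen_Ioi.mem_nhds (show r₁ ∈ Set.Ioi (0:ℝ) from hr₁)] with t ht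
      exact hpt r₂ t hr₂ ht
    rw [heq2.deriv_eq]
    exact ((hderiv_g' hd hr₁).mul_const _).deriv
  -- second derivative in s
  have key3 : deriv (deriv (fun t : ℝ => Real.sqrt (r₁ * t * (r₁ + d) * (t + d)))) r₂
      = (-(d ^ 2) / (4 * u₂ ^ 3)) * u₁ := by
    have heqf : (fun t : ℝ => Real.sqrt (r₁ * t * (r₁ + d) * (t + d)))
        = (fun t : ℝ => Real.sqrt (t * r₁ * (t + d) * (r₁ + d))) := by
      funext t; ring_nf
    rw [heqf]
    have heq2 : deriv (fun t : ℝ => Real.sqrt (t * r₁ * (t + d) * (r₁ + d)))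
        =ᶠ[nhds r₂] (fun t : ℝ => (2 * t + d) / (2 * Real.sqrt (t * (t + d))) * u₁) := by
      filter_upwards [isOpen_Ioi.mem_nhds (show r₂ ∈ Set.Ioi (0:ℝ) from hr₂)] with t ht
      exact hpt r₁ t hr₁ ht
    rw [heq2.deriv_eq]
    exact ((hderiv_g' hd hr₂).mul_const _).deriv
  -- bounds on a := (2r+d)/(2u)
  set a := (2 * r₁ + d) / (2 * u₁) with hadef
  set b := (2 * r₂ + d) / (2 * u₂) with hbdef
  have ha1 : 1 ≤ a := by
    rw [hadef, le_div_iff₀ (by positivity)]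
    have : u₁ ≤ r₁ + d / 2 := by
      rw [hu₁def, show r₁ + d / 2 = Real.sqrt ((r₁ + d / 2) ^ 2) from
        (Real.sqrt_sq (by positivity)).symm]
      exact Real.sqrt_le_sqrt (by nlinarith)
    linarith
  have hb1 : 1 ≤ b := by
    rw [hbdef, le_div_iff₀ (by positivity)]
    have : u₂ ≤ r₂ + d / 2 := by
      rw [hu₂def, show r₂ + d / 2 = Real.sqrt ((r₂ + d / 2) ^ 2) from
        (Real.sqrt_sq (by positivity)).symm]
      exact Real.sqrt_le_sqrt (by nlinarith)
    linarith
  have ha2 : a ^ 2 ≤ 1 + d ^ 2 / (4 * R ^ 2) := by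
    have hx : a ^ 2 = 1 + d ^ 2 / (4 * (r₁ * (r₁ + d))) := by
      rw [hadef, div_pow,
        show (2 * u₁) ^ 2 = 4 * (r₁ * (r₁ + d)) by nlinarith [hu₁sq]]
      field_simp
      ring
    rw [hx]
    gcongr
    nlinarith
  have hb2 : b ^ 2 ≤ 1 + d ^ 2 / (4 * R ^ 2) := by
    have hx : b ^ 2 = 1 + d ^ 2 / (4 * (r₂ * (r₂ + d))) := by
      rw [hbdef, div_pow,
        show (2 * u₂) ^ 2 = 4 * (r₂ * (r₂ + d)) by nlinarith [hu₂sq]]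
      field_simp
      ring
    rw [hx]
    gcongr
    nlinarith
  have hRd : d ^ 2 / (4 * R ^ 2) ≤ 1 / 4 := by
    rw [div_le_div_iff₀ (by positivity) (by norm_num)]
    nlinarith
  refine ⟨?_, ?_, ?_⟩
  · rw [key1]
    set x := d ^ 2 / R ^ 2 with hxdef
    have hx0 : 0 ≤ x := by positivity
    have hx1 : x ≤ 1 := by
      rw [hxdef, div_le_one (by positivity)]
      nlinarith
    have hEx : d ^ 2 / (4 * R ^ 2) = x / 4 := by
      rw [hxdef]; field_simp
    rw [hEx] at ha2 hb2
    have hab1 : 1 ≤ a * b := by nlinarith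
    have habsq : (a * b) ^ 2 ≤ (1 + x / 4) ^ 2 := by
      have h := mul_le_mul ha2 hb2 (sq_nonneg b) (by positivity)
      nlinarith [h]
    rw [abs_of_nonneg (by linarith)]
    have hstep : a * b - 1 ≤ (a * b) ^ 2 - 1 := by nlinarith
    have hfin : (1 + x / 4) ^ 2 - 1 ≤ 1 * x := by nlinarith
    have : (1:ℝ) * x = 1 * d ^ 2 / R ^ 2 := by rw [hxdef]; ring
    linarith [habsq, hstep, hfin]
  · rw [key2]
    have hneg : -(d ^ 2) / (4 * u₁ ^ 3) * u₂ ≤ 0 := by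
      have heq : -(d ^ 2) / (4 * u₁ ^ 3) * u₂ = -(d ^ 2 / (4 * u₁ ^ 3) * u₂) := by ring
      rw [heq]
      exact neg_nonpos.2 (by positivity)
    rw [abs_of_nonpos hneg]
    have : -(-(d ^ 2) / (4 * u₁ ^ 3) * u₂) = d ^ 2 * u₂ / (4 * u₁ ^ 3) := by ring
    rw [this, div_le_div_iff₀ (by positivity) (by positivity)]
    have hcube : R ^ 3 ≤ u₁ ^ 3 := pow_le_pow_left₀ hR.le hu₁ge 3
    nlinarith [mul_nonneg (mul_nonneg (sq_nonneg d) (sq_nonneg R)) (sub_nonneg.2 hu₂le),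
      mul_nonneg (sq_nonneg d) (sub_nonneg.2 hcube),
      mul_nonneg (sq_nonneg d) (pow_nonneg hu₁pos.le 3)]
  · rw [key3]
    have hneg : -(d ^ 2) / (4 * u₂ ^ 3) * u₁ ≤ 0 := by
      have heq : -(d ^ 2) / (4 * u₂ ^ 3) * u₁ = -(d ^ 2 / (4 * u₂ ^ 3) * u₁) := by ring
      rw [heq]
      exact neg_nonpos.2 (by positivity)
    rw [abs_of_nonpos hneg]
    have : -(-(d ^ 2) / (4 * u₂ ^ 3) * u₁) = d ^ 2 * u₁ / (4 * u₂ ^ 3) := by ring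
    rw [this, div_le_div_iff₀ (by positivity) (by positivity)]
    have hcube : R ^ 3 ≤ u₂ ^ 3 := pow_le_pow_left₀ hR.le hu₂ge 3
    nlinarith [mul_nonneg (mul_nonneg (sq_nonneg d) (sq_nonneg R)) (sub_nonneg.2 hu₁le),
      mul_nonneg (sq_nonneg d) (sub_nonneg.2 hcube),
      mul_nonneg (sq_nonneg d) (pow_nonneg hu₂pos.le 3)]
end

section
/- Fix integers d, u, v. If c₁, c₂ are positive integers with gcd(c₁, c₂) = 1, then for every integer γ one has S_{c₁ c₂}(γ) = S_{c₁}(γ c₂) · S_{c₂}(γ c₁). -/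
/-- `e_c(z) = exp(2πiz/c)`, well defined on residue classes mod `c`. -/
noncomputable def ec (c : ℕ) (z : ZMod c) : ℂ :=
  Complex.exp (2 * Real.pi * Complex.I * (z.val : ℂ) / (c : ℂ))

lemma ec_intCast (c : ℕ) [NeZero c] (n : ℤ) :
    ec c (n : ZMod c) = Complex.exp (2 * Real.pi * Complex.I * (n : ℂ) / (c : ℂ)) := by
  have hc : (c : ℂ) ≠ 0 := Nat.cast_ne_zero.2 (NeZero.ne c)
  have hv : (((n : ZMod c).val : ℤ) : ℂ) = ((n % c : ℤ) : ℂ) := by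
    exact_mod_cast congrArg (fun t : ℤ => (t : ℂ)) (ZMod.val_intCast n)
  unfold ec
  rw [show (((n : ZMod c).val : ℕ) : ℂ) = (((n : ZMod c).val : ℤ) : ℂ) by push_cast; ring, hv,
    Int.emod_def]
  push_cast
  rw [Complex.exp_eq_exp_iff_exists_int]
  refine ⟨-(n / c), ?_⟩
  field_simp
  push_cast
  ring

lemma ec_zmod (c : ℕ) [NeZero c] (z : ZMod c) : z = (((z.val : ℤ)) : ZMod c) := by
  push_cast
  simp [ZMod.natCast_val, ZMod.cast_id]

lemma ec_split_int (c₁ c₂ : ℕ) [NeZero c₁] [NeZero c₂] (x y : ℤ)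
    (hxy : (c₂ : ℤ) * x + (c₁ : ℤ) * y = 1) (n : ℤ) :
    ec (c₁ * c₂) (n : ZMod (c₁ * c₂)) =
      ec c₁ ((x * n : ℤ) : ZMod c₁) * ec c₂ ((y * n : ℤ) : ZMod c₂) := by
  haveI : NeZero (c₁ * c₂) := ⟨mul_ne_zero (NeZero.ne c₁) (NeZero.ne c₂)⟩
  have h1 : (c₁ : ℂ) ≠ 0 := Nat.cast_ne_zero.2 (NeZero.ne c₁)
  have h2 : (c₂ : ℂ) ≠ 0 := Nat.cast_ne_zero.2 (NeZero.ne c₂)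
  rw [ec_intCast, ec_intCast, ec_intCast, ← Complex.exp_add]
  congr 1
  have hC : (c₂ : ℂ) * x + (c₁ : ℂ) * y = 1 := by exact_mod_cast hxy
  push_cast
  field_simp
  linear_combination (-(n:ℂ)) * hC

lemma ec_split (c₁ c₂ : ℕ) [NeZero c₁] [NeZero c₂] (h : Nat.Coprime c₁ c₂) (x y : ℤ)
    (hxy : (c₂ : ℤ) * x + (c₁ : ℤ) * y = 1) (z : ZMod (c₁ * c₂)) :
    ec (c₁ * c₂) z =
      ec c₁ ((x : ZMod c₁) * (ZMod.chineseRemainder h z).1) *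
        ec c₂ ((y : ZMod c₂) * (ZMod.chineseRemainder h z).2) := by
  haveI : NeZero (c₁ * c₂) := ⟨mul_ne_zero (NeZero.ne c₁) (NeZero.ne c₂)⟩
  set n : ℤ := (z.val : ℤ) with hn
  have hz : ((n : ℤ) : ZMod (c₁ * c₂)) = z := (ec_zmod _ z).symm
  have hcrt : ZMod.chineseRemainder h z = ((n : ZMod c₁), (n : ZMod c₂)) := by
    rw [← hz]
    ext <;> simp [map_intCast]
  rw [hcrt, ← hz, ec_split_int c₁ c₂ x y hxy n]
  push_cast
  ring_nf


/-- The Kloosterman sum `S(n,m;c) = ∑_{x ∈ (ℤ/cℤ)ˣ} e_c(nx + m x⁻¹)`. -/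
noncomputable def Kloos (c : ℕ) [NeZero c] (n m : ZMod c) : ℂ :=
  ∑ x : (ZMod c)ˣ, ec c (n * (x : ZMod c) + m * ((x⁻¹ : (ZMod c)ˣ) : ZMod c))

lemma kloos_split (c₁ c₂ : ℕ) [NeZero c₁] [NeZero c₂] (h : Nat.Coprime c₁ c₂) (x y : ℤ)
    (hxy : (c₂ : ℤ) * x + (c₁ : ℤ) * y = 1) (N M : ZMod (c₁ * c₂)) :
    Kloos (c₁ * c₂) N M =
      Kloos c₁ ((x : ZMod c₁) * (ZMod.chineseRemainder h N).1)
          ((x : ZMod c₁) * (ZMod.chineseRemainder h M).1) *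
        Kloos c₂ ((y : ZMod c₂) * (ZMod.chineseRemainder h N).2)
          ((y : ZMod c₂) * (ZMod.chineseRemainder h M).2) := by
  haveI : NeZero (c₁ * c₂) := ⟨mul_ne_zero (NeZero.ne c₁) (NeZero.ne c₂)⟩
  set crt := ZMod.chineseRemainder h with hcrt
  set e : (ZMod c₁)ˣ × (ZMod c₂)ˣ ≃* (ZMod (c₁ * c₂))ˣ :=
    (MulEquiv.prodUnits.symm.trans (Units.mapEquiv crt.symm.toMulEquiv)) with he
  have key : ∀ p : (ZMod c₁)ˣ × (ZMod c₂)ˣ,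
      crt ((e p : (ZMod (c₁ * c₂)))) = ((p.1 : ZMod c₁), (p.2 : ZMod c₂)) := by
    intro p
    simp [he, Units.coe_mapEquiv, MulEquiv.prodUnits]
  have hinv : ∀ p : (ZMod c₁)ˣ × (ZMod c₂)ˣ, ((e p)⁻¹ : (ZMod (c₁*c₂))ˣ) = e p⁻¹ := by
    intro p; rw [← map_inv]
  rw [Kloos, ← Equiv.sum_comp e.toEquiv]
  have step : ∀ p : (ZMod c₁)ˣ × (ZMod c₂)ˣ,
      ec (c₁ * c₂) (N * ((e.toEquiv p : (ZMod (c₁*c₂))ˣ) : ZMod (c₁*c₂)) +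
        M * (((e.toEquiv p)⁻¹ : (ZMod (c₁*c₂))ˣ) : ZMod (c₁*c₂))) =
      ec c₁ (((x : ZMod c₁) * (crt N).1) * (p.1 : ZMod c₁) +
        ((x : ZMod c₁) * (crt M).1) * ((p.1⁻¹ : (ZMod c₁)ˣ) : ZMod c₁)) *
      ec c₂ (((y : ZMod c₂) * (crt N).2) * (p.2 : ZMod c₂) +
        ((y : ZMod c₂) * (crt M).2) * ((p.2⁻¹ : (ZMod c₂)ˣ) : ZMod c₂)) := by
    intro p
    rw [ec_split c₁ c₂ h x y hxy]
    have h1 : (crt (N * ((e p : (ZMod (c₁*c₂))ˣ) : ZMod (c₁*c₂)) +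
        M * (((e p)⁻¹ : (ZMod (c₁*c₂))ˣ) : ZMod (c₁*c₂)))) =
        ((crt N).1 * (p.1 : ZMod c₁) + (crt M).1 * ((p.1⁻¹ : (ZMod c₁)ˣ) : ZMod c₁),
         (crt N).2 * (p.2 : ZMod c₂) + (crt M).2 * ((p.2⁻¹ : (ZMod c₂)ˣ) : ZMod c₂)) := by
      rw [hinv, map_add, map_mul, map_mul, key, key]
      ext <;> simp
    simp only [MulEquiv.toEquiv_eq_coe, EquivLike.coe_coe] at *
    rw [h1]
    congr 1 <;> · congr 1; ring
  rw [Finset.sum_congr rfl (fun p _ => step p), Fintype.sum_prod_type]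
  rw [Kloos, Kloos, Finset.sum_mul_sum]


/-- The twisted sum
`S_c(γ) = ∑_{a,b (c)} S(a(γa+d), b(γb+d); c) · e_c(2γab + (d+u)a + (d+v)b)`. -/
noncomputable def Sc (c : ℕ) [NeZero c] (d u v : ℤ) (γ : ℤ) : ℂ :=
  ∑ a : ZMod c, ∑ b : ZMod c,
    Kloos c (a * (γ * a + d)) (b * (γ * b + d)) *
      ec c (2 * γ * a * b + (d + u) * a + (d + v) * b)

set_option maxHeartbeats 2000000 in
/-- Twisted multiplicativity: for fixed `d, u, v`, if
`gcd(c₁, c₂) = 1` then `S_{c₁c₂}(γ) = S_{c₁}(γc₂) · S_{c₂}(γc₁)`. -/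
theorem stmt_8 (d u v : ℤ) (c₁ c₂ : ℕ) [NeZero c₁] [NeZero c₂]
    (h : Nat.Coprime c₁ c₂) (γ : ℤ) :
    Sc (c₁ * c₂) d u v γ = Sc c₁ d u v (γ * c₂) * Sc c₂ d u v (γ * c₁) := by
  haveI : NeZero (c₁ * c₂) := ⟨mul_ne_zero (NeZero.ne c₁) (NeZero.ne c₂)⟩
  set x : ℤ := Nat.gcdB c₁ c₂ with hx
  set y : ℤ := Nat.gcdA c₁ c₂ with hy
  have hxy : (c₂ : ℤ) * x + (c₁ : ℤ) * y = 1 := by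
    have := Nat.gcd_eq_gcd_ab c₁ c₂
    rw [h] at this
    push_cast at this
    linarith
  have h1c : ((c₂ : ℕ) : ZMod c₁) * ((x : ℤ) : ZMod c₁) = 1 := by
    have := congrArg (fun t : ℤ => (t : ZMod c₁)) hxy
    push_cast at this
    simpa [ZMod.natCast_self] using this
  have h2c : ((c₁ : ℕ) : ZMod c₂) * ((y : ℤ) : ZMod c₂) = 1 := by
    have := congrArg (fun t : ℤ => (t : ZMod c₂)) hxy
    push_cast at this
    simpa [ZMod.natCast_self] using this
  set crt := ZMod.chineseRemainder h with hcrt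
  set A : ZMod c₁ × ZMod c₂ ≃ ZMod (c₁ * c₂) :=
    { toFun := fun p => crt.symm ((c₂ : ZMod c₁) * p.1, (c₁ : ZMod c₂) * p.2)
      invFun := fun z => (((x : ℤ) : ZMod c₁) * (crt z).1, ((y : ℤ) : ZMod c₂) * (crt z).2)
      left_inv := by
        intro p
        simp only [RingEquiv.apply_symm_apply]
        ext
        · show ((x : ℤ) : ZMod c₁) * ((c₂ : ZMod c₁) * p.1) = p.1
          rw [← mul_assoc, mul_comm ((x : ℤ) : ZMod c₁), h1c, one_mul]
        · show ((y : ℤ) : ZMod c₂) * ((c₁ : ZMod c₂) * p.2) = p.2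
          rw [← mul_assoc, mul_comm ((y : ℤ) : ZMod c₂), h2c, one_mul]
      right_inv := by
        intro z
        show crt.symm (_, _) = z
        have : ((c₂ : ZMod c₁) * (((x : ℤ) : ZMod c₁) * (crt z).1),
            (c₁ : ZMod c₂) * (((y : ℤ) : ZMod c₂) * (crt z).2)) = crt z := by
          ext
          · show (c₂ : ZMod c₁) * (((x : ℤ) : ZMod c₁) * (crt z).1) = (crt z).1
            rw [← mul_assoc, h1c, one_mul]
          · show (c₁ : ZMod c₂) * (((y : ℤ) : ZMod c₂) * (crt z).2) = (crt z).2
            rw [← mul_assoc, h2c, one_mul]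
        rw [this, RingEquiv.symm_apply_apply] } with hA
  have key : ∀ p : ZMod c₁ × ZMod c₂,
      crt (A p) = ((c₂ : ZMod c₁) * p.1, (c₁ : ZMod c₂) * p.2) := by
    intro p
    show crt (crt.symm _) = _
    rw [RingEquiv.apply_symm_apply]
  have argK1 : ∀ α : ZMod c₁,
      ((x : ℤ) : ZMod c₁) * (((c₂ : ZMod c₁) * α) * ((γ : ZMod c₁) * ((c₂ : ZMod c₁) * α) + (d : ZMod c₁))) =
        α * (((γ * c₂ : ℤ) : ZMod c₁) * α + (d : ZMod c₁)) := by
    intro α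
    push_cast
    push_cast at h1c
    linear_combination ((γ : ZMod c₁) * (c₂ : ZMod c₁) * α^2 + (d : ZMod c₁) * α) * h1c
  have argK2 : ∀ α : ZMod c₂,
      ((y : ℤ) : ZMod c₂) * (((c₁ : ZMod c₂) * α) * ((γ : ZMod c₂) * ((c₁ : ZMod c₂) * α) + (d : ZMod c₂))) =
        α * (((γ * c₁ : ℤ) : ZMod c₂) * α + (d : ZMod c₂)) := by
    intro α
    push_cast
    push_cast at h2c
    linear_combination ((γ : ZMod c₂) * (c₁ : ZMod c₂) * α^2 + (d : ZMod c₂) * α) * h2c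
  have argT1 : ∀ α β : ZMod c₁,
      ((x : ℤ) : ZMod c₁) * (2 * (γ : ZMod c₁) * ((c₂ : ZMod c₁) * α) * ((c₂ : ZMod c₁) * β) +
        ((d : ZMod c₁) + (u : ZMod c₁)) * ((c₂ : ZMod c₁) * α) + ((d : ZMod c₁) + (v : ZMod c₁)) * ((c₂ : ZMod c₁) * β)) =
      2 * ((γ * c₂ : ℤ) : ZMod c₁) * α * β + ((d : ZMod c₁) + (u : ZMod c₁)) * α + ((d : ZMod c₁) + (v : ZMod c₁)) * β := by
    intro α β
    push_cast
    push_cast at h1c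
    linear_combination (2 * (γ : ZMod c₁) * (c₂ : ZMod c₁) * α * β + ((d : ZMod c₁) + u) * α +
      ((d : ZMod c₁) + v) * β) * h1c
  have argT2 : ∀ α β : ZMod c₂,
      ((y : ℤ) : ZMod c₂) * (2 * (γ : ZMod c₂) * ((c₁ : ZMod c₂) * α) * ((c₁ : ZMod c₂) * β) +
        ((d : ZMod c₂) + (u : ZMod c₂)) * ((c₁ : ZMod c₂) * α) + ((d : ZMod c₂) + (v : ZMod c₂)) * ((c₁ : ZMod c₂) * β)) =
      2 * ((γ * c₁ : ℤ) : ZMod c₂) * α * β + ((d : ZMod c₂) + (u : ZMod c₂)) * α + ((d : ZMod c₂) + (v : ZMod c₂)) * β := by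
    intro α β
    push_cast
    push_cast at h2c
    linear_combination (2 * (γ : ZMod c₂) * (c₁ : ZMod c₂) * α * β + ((d : ZMod c₂) + u) * α +
      ((d : ZMod c₂) + v) * β) * h2c
  have hz : ∀ z : ZMod (c₁*c₂), crt (z * ((γ : ZMod (c₁*c₂)) * z + (d : ZMod (c₁*c₂)))) =
      ((crt z).1 * ((γ : ZMod c₁) * (crt z).1 + (d : ZMod c₁)),
       (crt z).2 * ((γ : ZMod c₂) * (crt z).2 + (d : ZMod c₂))) := by
    intro z
    rw [map_mul, map_add, map_mul, map_intCast, map_intCast]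
    ext <;> simp
  have htw : ∀ z w : ZMod (c₁*c₂),
      crt (2 * (γ : ZMod (c₁*c₂)) * z * w + ((d : ZMod (c₁*c₂)) + (u : ZMod (c₁*c₂))) * z +
        ((d : ZMod (c₁*c₂)) + (v : ZMod (c₁*c₂))) * w) =
      (2 * (γ : ZMod c₁) * (crt z).1 * (crt w).1 + ((d : ZMod c₁) + (u : ZMod c₁)) * (crt z).1 +
        ((d : ZMod c₁) + (v : ZMod c₁)) * (crt w).1,
       2 * (γ : ZMod c₂) * (crt z).2 * (crt w).2 + ((d : ZMod c₂) + (u : ZMod c₂)) * (crt z).2 +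
        ((d : ZMod c₂) + (v : ZMod c₂)) * (crt w).2) := by
    intro z w
    ext <;> simp [map_add, map_mul, map_intCast, map_ofNat]
  have pointwise : ∀ p q : ZMod c₁ × ZMod c₂,
      Kloos (c₁*c₂) ((A p) * ((γ : ZMod (c₁*c₂)) * (A p) + (d : ZMod (c₁*c₂))))
          ((A q) * ((γ : ZMod (c₁*c₂)) * (A q) + (d : ZMod (c₁*c₂)))) *
        ec (c₁*c₂) (2 * (γ : ZMod (c₁*c₂)) * (A p) * (A q) +
          ((d : ZMod (c₁*c₂)) + (u : ZMod (c₁*c₂))) * (A p) + ((d : ZMod (c₁*c₂)) + (v : ZMod (c₁*c₂))) * (A q)) =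
      (Kloos c₁ (p.1 * (((γ * c₂ : ℤ) : ZMod c₁) * p.1 + (d : ZMod c₁)))
          (q.1 * (((γ * c₂ : ℤ) : ZMod c₁) * q.1 + (d : ZMod c₁))) *
        ec c₁ (2 * ((γ * c₂ : ℤ) : ZMod c₁) * p.1 * q.1 + ((d : ZMod c₁) + (u : ZMod c₁)) * p.1 +
          ((d : ZMod c₁) + (v : ZMod c₁)) * q.1)) *
      (Kloos c₂ (p.2 * (((γ * c₁ : ℤ) : ZMod c₂) * p.2 + (d : ZMod c₂)))
          (q.2 * (((γ * c₁ : ℤ) : ZMod c₂) * q.2 + (d : ZMod c₂))) *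
        ec c₂ (2 * ((γ * c₁ : ℤ) : ZMod c₂) * p.2 * q.2 + ((d : ZMod c₂) + (u : ZMod c₂)) * p.2 +
          ((d : ZMod c₂) + (v : ZMod c₂)) * q.2)) := by
    intro p q
    rw [kloos_split c₁ c₂ h x y hxy, ec_split c₁ c₂ h x y hxy, ← hcrt]
    rw [hz, hz, htw, key p, key q]
    rw [argK1 p.1, argK1 q.1, argK2 p.2, argK2 q.2, argT1 p.1 q.1, argT2 p.2 q.2]
    ring
  rw [Sc, show (∑ a : ZMod (c₁*c₂), ∑ b : ZMod (c₁*c₂),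
      Kloos (c₁*c₂) (a * ((γ : ZMod (c₁*c₂)) * a + (d : ZMod (c₁*c₂))))
          (b * ((γ : ZMod (c₁*c₂)) * b + (d : ZMod (c₁*c₂)))) *
        ec (c₁*c₂) (2 * (γ : ZMod (c₁*c₂)) * a * b + ((d : ZMod (c₁*c₂)) + (u : ZMod (c₁*c₂))) * a +
          ((d : ZMod (c₁*c₂)) + (v : ZMod (c₁*c₂))) * b)) =
      ∑ r : ZMod (c₁*c₂) × ZMod (c₁*c₂),
      Kloos (c₁*c₂) (r.1 * ((γ : ZMod (c₁*c₂)) * r.1 + (d : ZMod (c₁*c₂))))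
          (r.2 * ((γ : ZMod (c₁*c₂)) * r.2 + (d : ZMod (c₁*c₂)))) *
        ec (c₁*c₂) (2 * (γ : ZMod (c₁*c₂)) * r.1 * r.2 + ((d : ZMod (c₁*c₂)) + (u : ZMod (c₁*c₂))) * r.1 +
          ((d : ZMod (c₁*c₂)) + (v : ZMod (c₁*c₂))) * r.2) from (Fintype.sum_prod_type (fun r : ZMod (c₁*c₂) × ZMod (c₁*c₂) =>
      Kloos (c₁*c₂) (r.1 * ((γ : ZMod (c₁*c₂)) * r.1 + (d : ZMod (c₁*c₂))))
          (r.2 * ((γ : ZMod (c₁*c₂)) * r.2 + (d : ZMod (c₁*c₂)))) *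
        ec (c₁*c₂) (2 * (γ : ZMod (c₁*c₂)) * r.1 * r.2 + ((d : ZMod (c₁*c₂)) + (u : ZMod (c₁*c₂))) * r.1 +
          ((d : ZMod (c₁*c₂)) + (v : ZMod (c₁*c₂))) * r.2))).symm,
    ← Equiv.sum_comp (A.prodCongr A)]
  simp only [Equiv.prodCongr_apply, Prod.map]
  simp only [pointwise]
  rw [Sc, Sc]
  simp only [Fintype.sum_prod_type, Finset.sum_mul_sum]
end

section
/- Fix integers d, u, v, let γ be an integer and let c be a positive integer with gcd(c, 2γ) = 1. Then S_c(γ) = c · ∑_{x ∈ (ℤ/cℤ)ˣ, u ≡ x·v (mod c)} G_c(γx) · e_c( − (4γ)⁻¹ · x · ((d+u)·x⁻¹ + d)² ), where G_c(t) = ∑_{a ∈ ℤ/cℤ} e_c(t a²) is the quadratic Gauss sum and (4γ)⁻¹ denotes the inverse of 4γ modulo c. -/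
/-- The quadratic Gauss sum `G_c(t) = ∑_{a (c)} e_c(t a²)`. -/
noncomputable def Gc (c : ℕ) [NeZero c] (t : ZMod c) : ℂ :=
  ∑ a : ZMod c, ec c (t * a ^ 2)

lemma ec_eq_std (c : ℕ) [NeZero c] (z : ZMod c) : ec c z = ZMod.stdAddChar z := by
  conv_rhs => rw [show z = ((z.val : ℤ) : ZMod c) by simp]
  rw [ZMod.stdAddChar_coe]
  simp [ec]

lemma inner_sum9 (c : ℕ) [NeZero c] (d u v γ : ℤ)
    (hI4 : (4 * (γ : ZMod c)) * (4 * (γ : ZMod c))⁻¹ = 1) (x : (ZMod c)ˣ) :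
    (∑ a : ZMod c, ∑ b : ZMod c, ZMod.stdAddChar (N := c)
      ((a * (γ * a + d)) * (x : ZMod c) + (b * (γ * b + d)) * ((x⁻¹ : (ZMod c)ˣ) : ZMod c)
        + (2 * γ * a * b + (d + u) * a + (d + v) * b)))
    = if (u : ZMod c) = (x : ZMod c) * (v : ZMod c) then
        (c : ℂ) * (Gc c ((γ : ZMod c) * (x : ZMod c)) *
          ec c (-((4 * (γ : ZMod c))⁻¹ * (x : ZMod c) *
            (((d : ZMod c) + (u : ZMod c)) * ((x⁻¹ : (ZMod c)ˣ) : ZMod c) + (d : ZMod c)) ^ 2)))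
      else 0 := by
  classical
  set ψ := (ZMod.stdAddChar (N := c)) with hψ
  set X : ZMod c := (x : ZMod c) with hX
  set Xi : ZMod c := ((x⁻¹ : (ZMod c)ˣ) : ZMod c) with hXi
  have hx : Xi * X = 1 := by
    rw [hX, hXi]; exact_mod_cast x.inv_mul
  set I4 : ZMod c := (4 * (γ : ZMod c))⁻¹ with hI4def
  set L : ZMod c := Xi * d + d + v with hL
  set s : ZMod c := 2 * I4 * X * L with hs
  -- step 1: rewrite the exponent
  have key : ∀ a b : ZMod c,
      (a * (γ * a + d)) * X + (b * (γ * b + d)) * Xi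
        + (2 * γ * a * b + (d + u) * a + (d + v) * b)
      = ((γ : ZMod c) * Xi * (X * a + b) ^ 2 + (X * a + b) * L) + a * (u - X * v) := by
    intro a b
    rw [hL]
    linear_combination (-(γ : ZMod c) * a ^ 2 * X - 2 * γ * a * b - a * d) * hx
  simp_rw [key, AddChar.map_add_eq_mul]
  -- step 2: reindex b and use orthogonality
  have hb : ∀ a : ZMod c,
      (∑ b : ZMod c, ψ ((γ : ZMod c) * Xi * (X * a + b) ^ 2) * ψ ((X * a + b) * L))
      = ∑ t : ZMod c, ψ ((γ : ZMod c) * Xi * t ^ 2) * ψ (t * L) := by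
    intro a
    exact Fintype.sum_bijective (fun b => X * a + b)
      (AddGroup.addLeft_bijective (X * a)) _ _ (fun b => rfl)
  simp_rw [← Finset.sum_mul, hb]
  rw [← Finset.mul_sum]
  -- orthogonality
  rw [show (∑ a : ZMod c, ψ (a * ((u : ZMod c) - X * v)))
        = if (u : ZMod c) - X * v = 0 then (Fintype.card (ZMod c) : ℂ) else 0
        from by exact_mod_cast AddChar.sum_mulShift _ (ZMod.isPrimitive_stdAddChar c)]
  by_cases hc : (u : ZMod c) = X * v
  · rw [if_pos (sub_eq_zero.mpr hc), if_pos hc, ZMod.card]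
    have hL' : ((d : ZMod c) + u) * Xi + d = L := by
      rw [hL]; linear_combination Xi * hc + (v : ZMod c) * hx
    rw [hL']
    have hsq : ∀ t : ZMod c,
        ψ ((γ : ZMod c) * Xi * t ^ 2) * ψ (t * L)
        = ψ ((γ : ZMod c) * Xi * (t + s) ^ 2) * ψ (-(I4 * X * L ^ 2)) := by
      intro t
      rw [← AddChar.map_add_eq_mul, ← AddChar.map_add_eq_mul]
      congr 1
      rw [hs]
      linear_combination (-(t * L) - I4 * X * L ^ 2) * hI4 +
        (-(4 * (γ : ZMod c) * I4) * (t * L + I4 * X * L ^ 2)) * hx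
    simp_rw [hsq]
    rw [← Finset.sum_mul]
    have hshift : (∑ t : ZMod c, ψ ((γ : ZMod c) * Xi * (t + s) ^ 2))
        = ∑ t : ZMod c, ψ ((γ : ZMod c) * Xi * t ^ 2) := by
      exact Fintype.sum_bijective (fun t => t + s)
        (AddGroup.addRight_bijective s) _ _ (fun t => rfl)
    have hGc : (∑ t : ZMod c, ψ ((γ : ZMod c) * Xi * t ^ 2)) = Gc c ((γ : ZMod c) * X) := by
      simp only [Gc, ec_eq_std]
      refine Fintype.sum_bijective (fun a => Xi * a) (Units.mulLeft_bijective x⁻¹) _ _ ?_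
      intro a
      congr 1
      linear_combination (-(γ : ZMod c) * Xi * a ^ 2) * hx
    rw [hshift, hGc, ec_eq_std]
    ring
  · rw [if_neg (fun hz => hc (sub_eq_zero.mp hz)), if_neg hc, mul_zero]

/-- For `gcd(c, 2γ) = 1`,
`S_c(γ) = c · ∑_{x ∈ (ℤ/cℤ)ˣ, u ≡ xv (c)} G_c(γx) · e_c(−(4γ)⁻¹ x ((d+u)x⁻¹ + d)²)`. -/
theorem stmt_9 (d u v γ : ℤ) (c : ℕ) [NeZero c] (h : Int.gcd (c : ℤ) (2 * γ) = 1) :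
    Sc c d u v γ = (c : ℂ) * ∑ x : (ZMod c)ˣ,
      if (u : ZMod c) = (x : ZMod c) * (v : ZMod c) then
        Gc c ((γ : ZMod c) * (x : ZMod c)) *
          ec c (-((4 * (γ : ZMod c))⁻¹ * (x : ZMod c) *
            (((d : ZMod c) + (u : ZMod c)) * ((x⁻¹ : (ZMod c)ˣ) : ZMod c) + (d : ZMod c)) ^ 2))
      else 0 := by
  classical
  have hco : IsCoprime (2 * γ : ℤ) (c : ℤ) :=
    Int.isCoprime_iff_gcd_eq_one.mpr (by rwa [Int.gcd_comm] at h)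
  obtain ⟨p, q, hpq⟩ := hco
  have hg : 2 * (γ : ZMod c) * (p : ZMod c) = 1 := by
    have h0 := congrArg (Int.cast : ℤ → ZMod c) hpq
    push_cast at h0
    rw [ZMod.natCast_self, mul_zero, add_zero] at h0
    linear_combination h0
  have h4 : IsUnit (4 * (γ : ZMod c)) := by
    refine IsUnit.of_mul_eq_one ((γ : ZMod c) * (p : ZMod c) ^ 2) ?_
    linear_combination (2 * (γ : ZMod c) * (p : ZMod c) + 1) * hg
  have hI4 : (4 * (γ : ZMod c)) * (4 * (γ : ZMod c))⁻¹ = 1 := ZMod.mul_inv_of_unit _ h4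
  rw [Sc]
  conv_lhs => simp only [Kloos, ec_eq_std, Finset.sum_mul, ← AddChar.map_add_eq_mul]
  calc (∑ a : ZMod c, ∑ b : ZMod c, ∑ x : (ZMod c)ˣ, ZMod.stdAddChar (N := c)
          ((a * (γ * a + d)) * (x : ZMod c) + (b * (γ * b + d)) * ((x⁻¹ : (ZMod c)ˣ) : ZMod c)
            + (2 * γ * a * b + (d + u) * a + (d + v) * b)))
      = ∑ x : (ZMod c)ˣ, ∑ a : ZMod c, ∑ b : ZMod c, ZMod.stdAddChar (N := c)
          ((a * (γ * a + d)) * (x : ZMod c) + (b * (γ * b + d)) * ((x⁻¹ : (ZMod c)ˣ) : ZMod c)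
            + (2 * γ * a * b + (d + u) * a + (d + v) * b)) := by
        conv_lhs => enter [2, a]; rw [Finset.sum_comm]
        rw [Finset.sum_comm]
    _ = ∑ x : (ZMod c)ˣ,
          if (u : ZMod c) = (x : ZMod c) * (v : ZMod c) then
            (c : ℂ) * (Gc c ((γ : ZMod c) * (x : ZMod c)) *
              ec c (-((4 * (γ : ZMod c))⁻¹ * (x : ZMod c) *
                (((d : ZMod c) + (u : ZMod c)) * ((x⁻¹ : (ZMod c)ˣ) : ZMod c) + (d : ZMod c)) ^ 2)))
          else 0 :=
        Finset.sum_congr rfl fun x _ => inner_sum9 c d u v γ hI4 x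
    _ = (c : ℂ) * ∑ x : (ZMod c)ˣ,
          if (u : ZMod c) = (x : ZMod c) * (v : ZMod c) then
            Gc c ((γ : ZMod c) * (x : ZMod c)) *
              ec c (-((4 * (γ : ZMod c))⁻¹ * (x : ZMod c) *
                (((d : ZMod c) + (u : ZMod c)) * ((x⁻¹ : (ZMod c)ˣ) : ZMod c) + (d : ZMod c)) ^ 2))
          else 0 := by
        rw [Finset.mul_sum]
        exact Finset.sum_congr rfl fun x _ => by rw [mul_ite, mul_zero]
end

section
/- Fix integers d, u, v, let γ be an integer and let c be a positive integer with gcd(c, 2γ) = 1. If gcd(u, c) ≠ gcd(v, c), then S_c(γ) = 0. -/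
lemma ec_exp_int (c : ℕ) [NeZero c] (m n : ℤ) (h : (m : ZMod c) = (n : ZMod c)) :
    Complex.exp (2 * Real.pi * Complex.I * (m : ℂ) / (c : ℂ)) =
      Complex.exp (2 * Real.pi * Complex.I * (n : ℂ) / (c : ℂ)) := by
  have hc : (c : ℂ) ≠ 0 := by exact_mod_cast NeZero.ne c
  obtain ⟨k, hk⟩ : (c : ℤ) ∣ m - n := by
    have := (ZMod.intCast_eq_intCast_iff' m n c).mp h
    exact Int.ModEq.dvd this.symm
  have hm : (m : ℂ) = n + c * k := by
    have : m = n + c * k := by linarith [hk]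
    exact_mod_cast this
  rw [hm]
  have : 2 * Real.pi * Complex.I * ((n : ℂ) + c * k) / c
      = 2 * Real.pi * Complex.I * (n : ℂ) / c + k * (2 * Real.pi * Complex.I) := by
    field_simp
  rw [this, Complex.exp_add, Complex.exp_int_mul_two_pi_mul_I, mul_one]

lemma ec_eq_int (c : ℕ) [NeZero c] (m : ℤ) :
    ec c (m : ZMod c) = Complex.exp (2 * Real.pi * Complex.I * (m : ℂ) / (c : ℂ)) := by
  unfold ec
  have h : (((((m : ZMod c)).val : ℤ)) : ZMod c) = (m : ZMod c) := by
    simp [ZMod.natCast_val, ZMod.cast_id]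
  have := ec_exp_int c ((m : ZMod c).val : ℤ) m h
  simpa using this

lemma ec_add (c : ℕ) [NeZero c] (z w : ZMod c) : ec c (z + w) = ec c z * ec c w := by
  set m : ℤ := (z.val : ℤ) + (w.val : ℤ) with hm
  have hz : ((z.val : ℤ) : ZMod c) = z := by simp [ZMod.natCast_val, ZMod.cast_id]
  have hw : ((w.val : ℤ) : ZMod c) = w := by simp [ZMod.natCast_val, ZMod.cast_id]
  have hzw : ((m : ℤ) : ZMod c) = z + w := by rw [hm]; push_cast [hz, hw]; ring
  calc ec c (z + w) = ec c ((m : ℤ) : ZMod c) := by rw [hzw]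
    _ = Complex.exp (2 * Real.pi * Complex.I * (m : ℂ) / c) := ec_eq_int c m
    _ = ec c z * ec c w := by
        unfold ec
        rw [← Complex.exp_add]
        congr 1
        have hc : (c : ℂ) ≠ 0 := by exact_mod_cast NeZero.ne c
        rw [hm]
        push_cast
        field_simp

lemma ec_ne_one (c : ℕ) [NeZero c] (z : ZMod c) (hz : z ≠ 0) : ec c z ≠ 1 := by
  unfold ec
  intro hcon
  rw [Complex.exp_eq_one_iff] at hcon
  obtain ⟨n, hn⟩ := hcon
  have hc : (c : ℂ) ≠ 0 := by exact_mod_cast NeZero.ne c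
  have h2 : (2 : ℂ) * Real.pi * Complex.I ≠ 0 := by
    simp [Real.pi_ne_zero, Complex.I_ne_zero]
  have h3 : (2 : ℂ) * Real.pi * Complex.I * (z.val : ℂ) =
      (2 : ℂ) * Real.pi * Complex.I * ((n : ℂ) * c) := by
    rw [div_eq_iff hc] at hn
    linear_combination hn
  have h4 : (z.val : ℂ) = (n : ℂ) * c := mul_left_cancel₀ h2 h3
  have h5 : (z.val : ℤ) = n * c := by exact_mod_cast h4
  have hvpos : 0 < z.val := Nat.pos_of_ne_zero (fun h0 => hz ((ZMod.val_eq_zero z).mp h0))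
  have hvlt : z.val < c := ZMod.val_lt z
  have hdvd : (c : ℤ) ∣ (z.val : ℤ) := ⟨n, by linarith⟩
  have := Int.le_of_dvd (by exact_mod_cast hvpos) hdvd
  omega

lemma sum_ec (c : ℕ) [NeZero c] (t : ZMod c) (ht : t ≠ 0) :
    ∑ b : ZMod c, ec c (t * b) = 0 := by
  have hbij : Function.Bijective (fun b : ZMod c => b + 1) := (Equiv.addRight (1 : ZMod c)).bijective
  have h1 : ∑ b : ZMod c, ec c (t * (b + 1)) = ∑ b : ZMod c, ec c (t * b) :=
    Fintype.sum_bijective _ hbij _ _ (fun b => rfl)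
  have h2 : ∑ b : ZMod c, ec c (t * (b + 1)) = ec c t * ∑ b : ZMod c, ec c (t * b) := by
    rw [Finset.mul_sum]
    refine Finset.sum_congr rfl fun b _ => ?_
    rw [mul_add, mul_one, ec_add, mul_comm]
  have h3 : (ec c t - 1) * ∑ b : ZMod c, ec c (t * b) = 0 := by
    rw [sub_mul, one_mul, ← h2, h1]
    ring
  rcases mul_eq_zero.mp h3 with h | h
  · exact absurd (sub_eq_zero.mp h) (ec_ne_one c t ht)
  · exact h

lemma gcd_dvd_of_eq_mul (u v : ℤ) (c : ℕ) [NeZero c] (x : (ZMod c)ˣ)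
    (hx : (u : ZMod c) = (v : ZMod c) * (x : ZMod c)) :
    Int.gcd v (c : ℤ) ∣ Int.gcd u (c : ℤ) := by
  set X : ℤ := ((x : ZMod c).val : ℤ) with hXdef
  have hX : ((X : ℤ) : ZMod c) = (x : ZMod c) := by
    simp [hXdef, ZMod.natCast_val, ZMod.cast_id]
  have hdvd : (c : ℤ) ∣ u - v * X := by
    have h0 : ((u - v * X : ℤ) : ZMod c) = 0 := by push_cast [hX]; rw [hx]; ring
    exact (ZMod.intCast_zmod_eq_zero_iff_dvd _ _).mp h0
  have hgu : (Int.gcd v (c : ℤ) : ℤ) ∣ u := by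
    have h1 : (Int.gcd v (c : ℤ) : ℤ) ∣ v * X := (Int.gcd_dvd_left _ _).mul_right X
    have h2 : (Int.gcd v (c : ℤ) : ℤ) ∣ u - v * X := (Int.gcd_dvd_right _ _).trans hdvd
    have := dvd_add h2 h1
    simpa using this
  exact_mod_cast Int.dvd_coe_gcd hgu (Int.gcd_dvd_right _ _)

/-- For `gcd(c, 2γ) = 1`, if `gcd(u,c) ≠ gcd(v,c)` then
`S_c(γ) = 0`. -/
theorem stmt_10 (d u v γ : ℤ) (c : ℕ) [NeZero c] (h : Int.gcd (c : ℤ) (2 * γ) = 1)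
    (huv : Int.gcd u (c : ℤ) ≠ Int.gcd v (c : ℤ)) :
    Sc c d u v γ = 0 := by
  have key : ∀ x : (ZMod c)ˣ, (u : ZMod c) - (v : ZMod c) * (x : ZMod c) ≠ 0 := by
    intro x hx0
    have h1 : (u : ZMod c) = (v : ZMod c) * (x : ZMod c) := by
      linear_combination hx0
    have h2 : (v : ZMod c) = (u : ZMod c) * ((x⁻¹ : (ZMod c)ˣ) : ZMod c) := by
      rw [h1, mul_assoc, ← Units.val_mul, mul_inv_cancel, Units.val_one, mul_one]
    exact huv (Nat.dvd_antisymm (gcd_dvd_of_eq_mul v u c x⁻¹ h2)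
      (gcd_dvd_of_eq_mul u v c x h1))
  calc Sc c d u v γ
      = ∑ a : ZMod c, ∑ x : (ZMod c)ˣ, ∑ b : ZMod c,
          ec c ((a * (γ * a + d)) * (x : ZMod c)
            + (b * (γ * b + d)) * ((x⁻¹ : (ZMod c)ˣ) : ZMod c)
            + (2 * γ * a * b + (d + u) * a + (d + v) * b)) := by
        unfold Sc Kloos
        refine Finset.sum_congr rfl fun a _ => ?_
        rw [Finset.sum_comm]
        refine Finset.sum_congr rfl fun b _ => ?_
        rw [Finset.sum_mul]
        exact Finset.sum_congr rfl fun x _ => (ec_add c _ _).symm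
    _ = ∑ x : (ZMod c)ˣ, ∑ a : ZMod c, ∑ b : ZMod c,
          ec c ((a * (γ * a + d)) * (x : ZMod c)
            + (b * (γ * b + d)) * ((x⁻¹ : (ZMod c)ˣ) : ZMod c)
            + (2 * γ * a * b + (d + u) * a + (d + v) * b)) := Finset.sum_comm
    _ = ∑ x : (ZMod c)ˣ, ∑ a : ZMod c, ∑ s : ZMod c,
          ec c ((γ * ((x⁻¹ : (ZMod c)ˣ) : ZMod c)) * s ^ 2
            + (d * ((x⁻¹ : (ZMod c)ˣ) : ZMod c) + d + v) * s)
          * ec c (((u : ZMod c) - (v : ZMod c) * (x : ZMod c)) * a) := by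
        refine Finset.sum_congr rfl fun x _ => Finset.sum_congr rfl fun a _ => ?_
        have hxx : (x : ZMod c) * ((x⁻¹ : (ZMod c)ˣ) : ZMod c) = 1 := by
          rw [← Units.val_mul, mul_inv_cancel, Units.val_one]
        rw [show (∑ b : ZMod c,
            ec c ((a * (γ * a + d)) * (x : ZMod c)
              + (b * (γ * b + d)) * ((x⁻¹ : (ZMod c)ˣ) : ZMod c)
              + (2 * γ * a * b + (d + u) * a + (d + v) * b)))
          = ∑ s : ZMod c,
            ec c ((a * (γ * a + d)) * (x : ZMod c)
              + ((s - (x : ZMod c) * a) * (γ * (s - (x : ZMod c) * a) + d))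
                  * ((x⁻¹ : (ZMod c)ˣ) : ZMod c)
              + (2 * γ * a * (s - (x : ZMod c) * a) + (d + u) * a
                  + (d + v) * (s - (x : ZMod c) * a)))
          from (Fintype.sum_bijective _
            (Equiv.subRight ((x : ZMod c) * a)).bijective _ _ (fun s => rfl)).symm]
        refine Finset.sum_congr rfl fun s _ => ?_
        rw [show (a * (γ * a + d)) * (x : ZMod c)
              + ((s - (x : ZMod c) * a) * (γ * (s - (x : ZMod c) * a) + d))
                  * ((x⁻¹ : (ZMod c)ˣ) : ZMod c)
              + (2 * γ * a * (s - (x : ZMod c) * a) + (d + u) * a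
                  + (d + v) * (s - (x : ZMod c) * a))
            = (γ * ((x⁻¹ : (ZMod c)ˣ) : ZMod c)) * s ^ 2
              + (d * ((x⁻¹ : (ZMod c)ˣ) : ZMod c) + d + v) * s
              + ((u : ZMod c) - (v : ZMod c) * (x : ZMod c)) * a
          from by linear_combination ((γ : ZMod c) * (x : ZMod c) * a ^ 2
            - 2 * γ * a * s - d * a) * hxx]
        rw [ec_add]
    _ = 0 := by
        refine Finset.sum_eq_zero fun x _ => ?_
        have hz : ∑ a : ZMod c,
            ec c (((u : ZMod c) - (v : ZMod c) * (x : ZMod c)) * a) = 0 :=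
          sum_ec c _ (key x)
        calc (∑ a : ZMod c, ∑ s : ZMod c,
              ec c ((γ * ((x⁻¹ : (ZMod c)ˣ) : ZMod c)) * s ^ 2
                + (d * ((x⁻¹ : (ZMod c)ˣ) : ZMod c) + d + v) * s)
              * ec c (((u : ZMod c) - (v : ZMod c) * (x : ZMod c)) * a))
            = ∑ a : ZMod c, (∑ s : ZMod c,
              ec c ((γ * ((x⁻¹ : (ZMod c)ˣ) : ZMod c)) * s ^ 2
                + (d * ((x⁻¹ : (ZMod c)ˣ) : ZMod c) + d + v) * s))
              * ec c (((u : ZMod c) - (v : ZMod c) * (x : ZMod c)) * a) := by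
              exact Finset.sum_congr rfl fun a _ => (Finset.sum_mul _ _ _).symm
          _ = (∑ s : ZMod c,
              ec c ((γ * ((x⁻¹ : (ZMod c)ˣ) : ZMod c)) * s ^ 2
                + (d * ((x⁻¹ : (ZMod c)ˣ) : ZMod c) + d + v) * s))
              * ∑ a : ZMod c,
              ec c (((u : ZMod c) - (v : ZMod c) * (x : ZMod c)) * a) :=
              (Finset.mul_sum _ _ _).symm
          _ = 0 := by rw [hz, mul_zero]
end
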